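/- arXiv:1805.08812 — 11 statements merged into one kernel-verified Lean document; each statement's English description precedes it below -/
import Mathlib

section
/- An infinite-dimensional evolution algebra does not have a unit element. -/
/-- An infinite-dimensional evolution algebra does not have a unit element. -/
theorem stmt0 {K : Type*} [Field K] {A : Type*} [NonUnitalNonAssocRing A]
    [Module K A] [SMulCommClass K A A] [IsScalarTower K A A]
    {ι : Type*} (b : Module.Basis ι K A) (hnat : ∀ i j : ι, i ≠ j → b i * b j = 0)
    (hinf : ¬ FiniteDimensional K A) :
    ¬ ∃ e : A, ∀ a : A, a * e = a ∧ e * a = a := by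
  rintro ⟨e, he⟩
  -- ι must be infinite
  haveI hinfι : Infinite ι := by
    by_contra h
    have h2 : Finite ι := not_infinite_iff_finite.mp h
    haveI : Fintype ι := @Fintype.ofFinite ι h2
    exact hinf (Module.Finite.of_basis b)
  -- pick j outside the support of e's coordinates
  obtain ⟨j, hj⟩ := Infinite.exists_notMem_finset ((b.repr e).support)
  have hrepr : (∑ i ∈ (b.repr e).support, (b.repr e) i • b i) = e := by
    conv_rhs => rw [← b.linearCombination_repr e]
    rw [Finsupp.linearCombination_apply, Finsupp.sum]
  have h0 : b j = 0 := by
    have := (he (b j)).1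
    rw [← hrepr, Finset.mul_sum] at this
    have hz : ∀ i ∈ (b.repr e).support, b j * ((b.repr e) i • b i) = 0 := by
      intro i hi
      rw [mul_smul_comm, hnat j i (by rintro rfl; exact hj hi), smul_zero]
    rw [Finset.sum_congr rfl hz, Finset.sum_const_zero] at this
    exact this.symm
  exact b.ne_zero j h0
end

section
/- A finite-dimensional evolution algebra A has a unit if and only if for every natural basis {e_1, ..., e_n}, e_i² = ω_ii e_i with ω_ii ≠ 0 for every i; in that case the unit is e = (1/ω_11)e_1 + ... + (1/ω_nn)e_n. -/
/-- A finite-dimensional evolution algebra `A` has a unit iff for every natural basis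
`{e_1, ..., e_n}` one has `e_i² = ω_ii • e_i` with `ω_ii ≠ 0` for every `i`; in that case
the unit is `e = Σ_i (ω_ii)⁻¹ • e_i`. -/
theorem stmt1 {K : Type*} [Field K] {A : Type*} [NonUnitalNonAssocRing A]
    [Module K A] [SMulCommClass K A A] [IsScalarTower K A A]
    [FiniteDimensional K A]
    {n : ℕ} (b : Module.Basis (Fin n) K A) (hnat : ∀ i j : Fin n, i ≠ j → b i * b j = 0) :
    ((∃ e : A, ∀ a : A, a * e = a ∧ e * a = a) ↔
      ∀ (m : ℕ) (c : Module.Basis (Fin m) K A), (∀ i j : Fin m, i ≠ j → c i * c j = 0) →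
        ∀ i : Fin m, ∃ ω : K, ω ≠ 0 ∧ c i * c i = ω • c i) ∧
    (∀ (m : ℕ) (c : Module.Basis (Fin m) K A), (∀ i j : Fin m, i ≠ j → c i * c j = 0) →
      ∀ ω : Fin m → K, (∀ i : Fin m, ω i ≠ 0 ∧ c i * c i = ω i • c i) →
        ∀ a : A, a * (∑ i : Fin m, (ω i)⁻¹ • c i) = a ∧ (∑ i : Fin m, (ω i)⁻¹ • c i) * a = a) := by
  have part2 : ∀ (m : ℕ) (c : Module.Basis (Fin m) K A), (∀ i j : Fin m, i ≠ j → c i * c j = 0) →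
      ∀ ω : Fin m → K, (∀ i : Fin m, ω i ≠ 0 ∧ c i * c i = ω i • c i) →
        ∀ a : A, a * (∑ i : Fin m, (ω i)⁻¹ • c i) = a ∧
          (∑ i : Fin m, (ω i)⁻¹ • c i) * a = a := by
    intro m c hc ω hω
    have hr : ∀ j, c j * (∑ i : Fin m, (ω i)⁻¹ • c i) = c j := by
      intro j
      rw [Finset.mul_sum, Finset.sum_eq_single j]
      · rw [mul_smul_comm, (hω j).2, smul_smul, inv_mul_cancel₀ (hω j).1, one_smul]
      · intro i _ hij
        rw [mul_smul_comm, hc j i (Ne.symm hij), smul_zero]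
      · intro h; exact absurd (Finset.mem_univ j) h
    have hl : ∀ j, (∑ i : Fin m, (ω i)⁻¹ • c i) * c j = c j := by
      intro j
      rw [Finset.sum_mul, Finset.sum_eq_single j]
      · rw [smul_mul_assoc, (hω j).2, smul_smul, inv_mul_cancel₀ (hω j).1, one_smul]
      · intro i _ hij
        rw [smul_mul_assoc, hc i j hij, smul_zero]
      · intro h; exact absurd (Finset.mem_univ j) h
    intro a
    constructor
    · conv_lhs => rw [← c.sum_repr a, Finset.sum_mul]
      simp_rw [smul_mul_assoc, hr]
      exact c.sum_repr a
    · conv_lhs => rw [← c.sum_repr a, Finset.mul_sum]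
      simp_rw [mul_smul_comm, hl]
      exact c.sum_repr a
  refine ⟨⟨?_, ?_⟩, part2⟩
  · rintro ⟨e, he⟩ m c hc i
    have hrepr : c i = (c.repr e i) • (c i * c i) := by
      conv_lhs => rw [← (he (c i)).1, ← c.sum_repr e]
      rw [Finset.mul_sum, Finset.sum_eq_single i]
      · rw [mul_smul_comm]
      · intro j _ hji
        rw [mul_smul_comm, hc i j (Ne.symm hji), smul_zero]
      · intro h; exact absurd (Finset.mem_univ i) h
    have hne : c.repr e i ≠ 0 := by
      intro h
      rw [h, zero_smul] at hrepr
      exact c.ne_zero i hrepr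
    refine ⟨(c.repr e i)⁻¹, inv_ne_zero hne, ?_⟩
    conv_rhs => rw [hrepr]
    rw [smul_smul, inv_mul_cancel₀ hne, one_smul]
  · intro h
    choose ω hω using h n b hnat
    exact ⟨∑ i : Fin n, (ω i)⁻¹ • b i, part2 n b hnat ω hω⟩
end

section
/- An evolution algebra A has a unit if and only if A is a finite-dimensional non-zero trivial evolution algebra (i.e., relative to some natural basis {e_1,...,e_n}, e_i² = ω_ii e_i with ω_ii ≠ 0 for every i). -/
/-- An evolution algebra has a unit iff it is a finite-dimensional non-zero trivial
evolution algebra (i.e. relative to a natural basis, `e_i² = ω_ii • e_i` with `ω_ii ≠ 0`). -/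
theorem stmt4 {K : Type*} [Field K] {A : Type*} [NonUnitalNonAssocRing A]
    [Module K A] [SMulCommClass K A A] [IsScalarTower K A A]
    {ι : Type*} (b : Module.Basis ι K A) (hnat : ∀ i j : ι, i ≠ j → b i * b j = 0) :
    (∃ e : A, ∀ a : A, a * e = a ∧ e * a = a) ↔
      (FiniteDimensional K A ∧ ∀ i : ι, ∃ ω : K, ω ≠ 0 ∧ b i * b i = ω • b i) := by
  constructor
  · rintro ⟨e, he⟩
    have key : ∀ i, b i * e = b i := fun i => (he (b i)).1
    set c := b.repr e with hc
    have hrepr : e = ∑ j ∈ c.support, c j • b j := by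
      conv_lhs => rw [← b.linearCombination_repr e]
      rw [Finsupp.linearCombination_apply, Finsupp.sum]
    have hmul : ∀ i, i ∈ c.support ∧ c i • (b i * b i) = b i := by
      intro i
      have h1 : b i * e = ∑ j ∈ c.support, c j • (b i * b j) := by
        rw [hrepr, Finset.mul_sum]
        exact Finset.sum_congr rfl fun j _ => mul_smul_comm _ _ _
      by_cases hi : i ∈ c.support
      · refine ⟨hi, ?_⟩
        have h2 : ∑ j ∈ c.support, c j • (b i * b j) = c i • (b i * b i) :=
          Finset.sum_eq_single_of_mem i hi fun j _ hj => by
            rw [hnat i j (Ne.symm hj), smul_zero]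
        rw [← h2, ← h1, key i]
      · exfalso
        apply b.ne_zero i
        have h2 : ∑ j ∈ c.support, c j • (b i * b j) = 0 :=
          Finset.sum_eq_zero fun j hj => by
            rw [hnat i j (by rintro rfl; exact hi hj), smul_zero]
        rw [← key i, h1, h2]
    constructor
    · have : Finite ι := by
        have hfin : (Set.univ : Set ι).Finite :=
          c.support.finite_toSet.subset fun i _ => (hmul i).1
        exact Set.finite_univ_iff.mp hfin
      exact Module.Finite.of_basis b
    · intro i
      obtain ⟨hi, heq⟩ := hmul i
      have hci : c i ≠ 0 := Finsupp.mem_support_iff.mp hi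
      refine ⟨(c i)⁻¹, inv_ne_zero hci, ?_⟩
      conv_rhs => rw [← heq]
      rw [smul_smul, inv_mul_cancel₀ hci, one_smul]
  · rintro ⟨hfd, hω⟩
    choose ω hω0 hωeq using hω
    haveI : Fintype ι := FiniteDimensional.fintypeBasisIndex b
    set e : A := ∑ i, (ω i)⁻¹ • b i with he
    have hright : ∀ j, b j * e = b j := by
      intro j
      rw [he, Finset.mul_sum]
      rw [Finset.sum_eq_single_of_mem j (Finset.mem_univ j)
        (fun i _ hij => by rw [mul_smul_comm, hnat j i (Ne.symm hij), smul_zero])]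
      rw [mul_smul_comm, hωeq j, smul_smul, inv_mul_cancel₀ (hω0 j), one_smul]
    have hleft : ∀ j, e * b j = b j := by
      intro j
      rw [he, Finset.sum_mul]
      rw [Finset.sum_eq_single_of_mem j (Finset.mem_univ j)
        (fun i _ hij => by rw [smul_mul_assoc, hnat i j hij, smul_zero])]
      rw [smul_mul_assoc, hωeq j, smul_smul, inv_mul_cancel₀ (hω0 j), one_smul]
    refine ⟨e, fun a => ⟨?_, ?_⟩⟩
    · have h : LinearMap.mulRight K e = LinearMap.id :=
        b.ext fun j => by simp [LinearMap.mulRight_apply, hright j]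
      simpa using LinearMap.congr_fun h a
    · have h : LinearMap.mulLeft K e = LinearMap.id :=
        b.ext fun j => by simp [LinearMap.mulLeft_apply, hleft j]
      simpa using LinearMap.congr_fun h a
end

section
/- Let A be an algebra and A₁ = A ⊕ K·1 its unitization. Then A₁ is an evolution algebra if and only if A is an evolution algebra with a unit, if and only if A is a finite-dimensional non-zero trivial evolution algebra. -/
set_option linter.unusedSectionVars false
open Module

section
variable {K : Type} [Field K] {A : Type} [NonUnitalNonAssocRing A]
    [Module K A] [SMulCommClass K A A] [IsScalarTower K A A]

lemma usmul_mul (s : K) (x y : Unitization K A) : (s • x) * y = s • (x * y) := by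
  ext
  · simp [Unitization.fst_mul, mul_assoc]
  · simp only [Unitization.snd_mul, Unitization.snd_smul, Unitization.fst_smul, smul_add,
      smul_mul_assoc, mul_smul, smul_assoc]
    rw [smul_comm y.fst s]

lemma umul_smul (s : K) (x y : Unitization K A) : x * (s • y) = s • (x * y) := by
  ext
  · simp only [Unitization.fst_mul, Unitization.fst_smul, smul_eq_mul]; ring
  · simp only [Unitization.snd_mul, Unitization.snd_smul, Unitization.fst_smul, smul_add,
      mul_smul_comm, mul_smul, smul_eq_mul, smul_assoc]
    rw [smul_comm x.fst s]

/-- Core: with an orthogonal basis and a right unit, every basis coefficient of the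
unit is nonzero and squares are scalar multiples. -/
lemma evo_core {M ι : Type} [NonUnitalNonAssocRing M] [Module K M]
    (hms : ∀ (s : K) (x y : M), x * (s • y) = s • (x * y))
    (b : Basis ι K M) (horth : ∀ i j, i ≠ j → b i * b j = 0)
    (u : M) (hu : ∀ x : M, x * u = x) :
    ∀ j, (b.repr u) j ≠ 0 ∧ b j * b j = ((b.repr u) j)⁻¹ • b j := by
  intro j
  have hrepr : u = ∑ i ∈ (b.repr u).support, (b.repr u) i • b i := by
    conv_lhs => rw [← b.linearCombination_repr u]
    rw [Finsupp.linearCombination_apply, Finsupp.sum]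
  have h2 : b j = (b.repr u) j • (b j * b j) := by
    conv_lhs => rw [← hu (b j), hrepr, Finset.mul_sum]
    simp only [hms]
    refine Finset.sum_eq_single j (fun i _ hij => ?_) (fun hj => ?_)
    · rw [horth j i (Ne.symm hij), smul_zero]
    · rw [Finsupp.notMem_support_iff.mp hj, zero_smul]
  have hj : (b.repr u) j ≠ 0 := by
    intro h
    exact b.ne_zero j (by rw [h2, h, zero_smul])
  refine ⟨hj, ?_⟩
  conv_rhs => rw [h2]
  rw [smul_smul, inv_mul_cancel₀ hj, one_smul]

end

section
variable {K : Type} [Field K] {A : Type} [NonUnitalNonAssocRing A]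
    [Module K A] [SMulCommClass K A A] [IsScalarTower K A A]

/-- `inr` as a linear map. -/
def inrL (K A : Type) [Field K] [NonUnitalNonAssocRing A] [Module K A] :
    A →ₗ[K] Unitization K A where
  toFun := Unitization.inr
  map_add' a b := by ext <;> simp
  map_smul' s a := by ext <;> simp

/-- `snd` as a linear map. -/
def sndL (K A : Type) [Field K] [NonUnitalNonAssocRing A] [Module K A] :
    Unitization K A →ₗ[K] A where
  toFun := fun x => x.snd
  map_add' a b := rfl
  map_smul' s a := rfl

/-- `fst` as a linear map. -/
def fstL (K A : Type) [Field K] [NonUnitalNonAssocRing A] [Module K A] :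
    Unitization K A →ₗ[K] K where
  toFun := fun x => x.fst
  map_add' a b := rfl
  map_smul' s a := rfl

lemma fstL_apply (x : Unitization K A) : fstL K A x = x.fst := rfl

lemma sndL_apply (x : Unitization K A) : sndL K A x = x.snd := rfl

/-- From an orthogonal basis with a unit, get finite-dimensionality and a trivial basis. -/
lemma toTrivial {ι : Type} (b : Basis ι K A) (horth : ∀ i j, i ≠ j → b i * b j = 0)
    (e : A) (he : ∀ a : A, a * e = a) :
    FiniteDimensional K A ∧ ∃ (n : ℕ) (c : Basis (Fin n) K A),
      (∀ i j : Fin n, i ≠ j → c i * c j = 0) ∧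
      ∀ i : Fin n, ∃ ω : K, ω ≠ 0 ∧ c i * c i = ω • c i := by
  have hcore := evo_core (fun s x y => mul_smul_comm s x y) b horth e he
  have hfin : Finite ι := by
    refine Finite.of_injective
      (fun j => (⟨j, Finsupp.mem_support_iff.2 (hcore j).1⟩ : (b.repr e).support)) ?_
    intro x y hxy
    simpa using hxy
  have := Fintype.ofFinite ι
  refine ⟨Module.Finite.of_basis b, Fintype.card ι, b.reindex (Fintype.equivFin ι), ?_, ?_⟩
  · intro i j hij
    simp only [Basis.reindex_apply]
    exact horth _ _ (fun h => hij (by simpa using congrArg (Fintype.equivFin ι) h))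
  · intro i
    refine ⟨((b.repr e) ((Fintype.equivFin ι).symm i))⁻¹,
      inv_ne_zero (hcore _).1, ?_⟩
    simp only [Basis.reindex_apply]
    exact (hcore _).2

/-- A trivial evolution basis yields a unit. -/
lemma unit_of_trivial {n : ℕ} (b : Basis (Fin n) K A)
    (horth : ∀ i j : Fin n, i ≠ j → b i * b j = 0)
    (hsq : ∀ i : Fin n, ∃ ω : K, ω ≠ 0 ∧ b i * b i = ω • b i) :
    ∃ e : A, ∀ a : A, a * e = a ∧ e * a = a := by
  choose ω hω0 hsq using hsq
  refine ⟨∑ i, (ω i)⁻¹ • b i, fun a => ?_⟩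
  have hb : ∀ j, b j * (∑ i, (ω i)⁻¹ • b i) = b j := by
    intro j
    rw [Finset.mul_sum]
    simp only [mul_smul_comm]
    rw [Finset.sum_eq_single j (fun i _ hij => by rw [horth j i (Ne.symm hij), smul_zero])
      (fun h => absurd (Finset.mem_univ j) h)]
    rw [hsq j, smul_smul, inv_mul_cancel₀ (hω0 j), one_smul]
  have hb' : ∀ j, (∑ i, (ω i)⁻¹ • b i) * b j = b j := by
    intro j
    rw [Finset.sum_mul]
    simp only [smul_mul_assoc]
    rw [Finset.sum_eq_single j (fun i _ hij => by rw [horth i j hij, smul_zero])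
      (fun h => absurd (Finset.mem_univ j) h)]
    rw [hsq j, smul_smul, inv_mul_cancel₀ (hω0 j), one_smul]
  constructor
  · conv_rhs => rw [← b.sum_repr a]
    conv_lhs => rw [← b.sum_repr a, Finset.sum_mul]
    exact Finset.sum_congr rfl (fun j _ => by rw [smul_mul_assoc, hb j])
  · conv_rhs => rw [← b.sum_repr a]
    conv_lhs => rw [← b.sum_repr a, Finset.mul_sum]
    exact Finset.sum_congr rfl (fun j _ => by rw [mul_smul_comm, hb' j])

end

section
variable {K : Type} [Field K] {A : Type} [NonUnitalNonAssocRing A]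
    [Module K A] [SMulCommClass K A A] [IsScalarTower K A A]

lemma smul_one_eq_inl (r : K) : r • (1 : Unitization K A) = Unitization.inl r := by
  ext <;> simp

/-- (3) ⇒ (1): a trivial finite basis of `A` gives an evolution basis of the unitization. -/
lemma trivialToUnit {n : ℕ} (b : Basis (Fin n) K A)
    (horth : ∀ i j : Fin n, i ≠ j → b i * b j = 0)
    (hsq : ∀ i : Fin n, ∃ ω : K, ω ≠ 0 ∧ b i * b i = ω • b i) :
    ∃ (ι : Type) (c : Basis ι K (Unitization K A)),
      ∀ i j : ι, i ≠ j → c i * c j = 0 := by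
  obtain ⟨e, he⟩ := unit_of_trivial b horth hsq
  set c : Option (Fin n) → Unitization K A :=
    fun o => o.elim (1 - Unitization.inr e) (fun i => Unitization.inr (b i)) with hc
  have hcnone : c none = 1 - Unitization.inr e := rfl
  have hcsome : ∀ i, c (some i) = Unitization.inr (b i) := fun i => rfl
  have hind : LinearIndependent K c := by
    rw [Fintype.linearIndependent_iff]
    intro g hg
    have hfst : g none = 0 := by
      have h := congrArg (fstL K A) hg
      rw [map_sum, map_zero, Fintype.sum_option] at h
      have h1 : fstL K A (c none) = 1 := by
        rw [hcnone, map_sub]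
        simp [fstL_apply]
      have h2 : ∀ i, fstL K A (c (some i)) = 0 := fun i => by simp [hcsome, fstL_apply]
      simp only [map_smul, h1, h2, smul_zero, mul_zero, Finset.sum_const_zero, add_zero,
        smul_eq_mul, mul_one] at h
      exact h
    have hsum : ∑ i, g (some i) • b i = 0 := by
      have h2 : ∑ i : Fin n, g (some i) • c (some i) = 0 := by
        rw [Fintype.sum_option, hfst, zero_smul, zero_add] at hg
        exact hg
      have := congrArg (sndL K A) h2
      rw [map_sum, map_zero] at this
      simpa [hcsome, sndL_apply, c] using this
    intro o
    match o with
    | none => exact hfst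
    | some i =>
      exact (Fintype.linearIndependent_iff.mp b.linearIndependent)
        (fun i => g (some i)) hsum i
  have hinr_span : ∀ a : A, Unitization.inr a ∈ Submodule.span K (Set.range c) := by
    intro a
    have h1 : Unitization.inr a = inrL K A a := rfl
    have h2 : a ∈ Submodule.span K (Set.range ⇑b) := by rw [b.span_eq]; trivial
    rw [h1]
    have h3 := Submodule.mem_map_of_mem (f := inrL K A) h2
    rw [Submodule.map_span] at h3
    refine Submodule.span_mono ?_ h3
    rintro y ⟨-, ⟨i, rfl⟩, rfl⟩
    exact ⟨some i, rfl⟩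
  have hspan : ⊤ ≤ Submodule.span K (Set.range c) := by
    intro x _
    have hx : x = x.fst • (1 : Unitization K A) + Unitization.inr x.snd := by
      rw [smul_one_eq_inl, Unitization.inl_fst_add_inr_snd_eq]
    have h1 : (1 : Unitization K A) = c none + Unitization.inr e := by
      rw [hcnone, sub_add_cancel]
    rw [hx, h1]
    exact Submodule.add_mem _
      (Submodule.smul_mem _ _ (Submodule.add_mem _
        (Submodule.subset_span ⟨none, rfl⟩) (hinr_span e)))
      (hinr_span x.snd)
  refine ⟨Option (Fin n), Basis.mk hind hspan, ?_⟩
  intro i j hij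
  rw [Basis.mk_apply, Basis.mk_apply]
  match i, j with
  | none, none => exact absurd rfl hij
  | none, some j =>
    rw [hcnone, hcsome, sub_mul, one_mul, ← Unitization.inr_mul, (he (b j)).2, sub_self]
  | some i, none =>
    rw [hcnone, hcsome, mul_sub, mul_one, ← Unitization.inr_mul, (he (b i)).1, sub_self]
  | some i, some j =>
    rw [hcsome, hcsome, ← Unitization.inr_mul, horth i j (by simpa using hij)]
    simp

end

section
variable {K : Type} [Field K] {A : Type} [NonUnitalNonAssocRing A]
    [Module K A] [SMulCommClass K A A] [IsScalarTower K A A]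

/-- (1) ⇒ (3): an evolution basis of the unitization gives a finite trivial basis of `A`. -/
lemma unitToTrivial {ι : Type} (b : Basis ι K (Unitization K A))
    (horth : ∀ i j, i ≠ j → b i * b j = 0) :
    FiniteDimensional K A ∧ ∃ (n : ℕ) (c : Basis (Fin n) K A),
      (∀ i j : Fin n, i ≠ j → c i * c j = 0) ∧
      ∀ i : Fin n, ∃ ω : K, ω ≠ 0 ∧ c i * c i = ω • c i := by
  classical
  have hcore := evo_core (umul_smul (A := A)) b horth 1 (mul_one)
  set lam : ι →₀ K := b.repr 1 with hlam
  have hlam0 : ∀ j, lam j ≠ 0 := fun j => (hcore j).1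
  have hbsq : ∀ j, b j * b j = (lam j)⁻¹ • b j := fun j => (hcore j).2
  have hfin : Finite ι := by
    refine Finite.of_injective
      (fun j => (⟨j, Finsupp.mem_support_iff.2 (hlam0 j)⟩ : lam.support)) ?_
    intro x y hxy; simpa using hxy
  have := Fintype.ofFinite ι
  have hfinU : Module.Finite K (Unitization K A) := Module.Finite.of_basis b
  have hfinA : FiniteDimensional K A :=
    Module.Finite.of_surjective (sndL K A) (fun a => ⟨Unitization.inr a, rfl⟩)
  set v : ι → Unitization K A := fun i => lam i • b i with hv
  have hv_idem : ∀ i, v i * v i = v i := by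
    intro i
    show (lam i • b i) * (lam i • b i) = lam i • b i
    rw [usmul_mul, umul_smul, hbsq i, smul_smul, smul_smul, mul_assoc,
      mul_inv_cancel₀ (hlam0 i), mul_one]
  have hv_orth : ∀ i j, i ≠ j → v i * v j = 0 := by
    intro i j hij
    show (lam i • b i) * (lam j • b j) = 0
    rw [usmul_mul, umul_smul, horth i j hij, smul_zero, smul_zero]
  have hmulr : ∀ (x : Unitization K A) (j : ι), x * b j = (b.repr x) j • (b j * b j) := by
    intro x j
    conv_lhs => rw [← b.sum_repr x, Finset.sum_mul]
    simp only [usmul_mul]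
    exact Finset.sum_eq_single j (fun i _ hij => by rw [horth i j hij, smul_zero])
      (fun h => absurd (Finset.mem_univ j) h)
  have hmull : ∀ (x : Unitization K A) (j : ι), b j * x = (b.repr x) j • (b j * b j) := by
    intro x j
    conv_lhs => rw [← b.sum_repr x, Finset.mul_sum]
    simp only [umul_smul]
    exact Finset.sum_eq_single j (fun i _ hij => by rw [horth j i (Ne.symm hij), smul_zero])
      (fun h => absurd (Finset.mem_univ j) h)
  have hxv : ∀ (x : Unitization K A) (j : ι), x * v j = (b.repr x) j • b j := by
    intro x j
    show x * (lam j • b j) = _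
    rw [umul_smul, hmulr x j, hbsq j, smul_smul, smul_smul, mul_comm (lam j),
      mul_assoc, mul_inv_cancel₀ (hlam0 j), mul_one]
  have hvx : ∀ (x : Unitization K A) (j : ι), v j * x = (b.repr x) j • b j := by
    intro x j
    show (lam j • b j) * x = _
    rw [usmul_mul, hmull x j, hbsq j, smul_smul, smul_smul, mul_comm (lam j),
      mul_assoc, mul_inv_cancel₀ (hlam0 j), mul_one]
  have hsumv : ∑ i, v i = 1 := b.sum_repr 1
  set T : Finset ι := Finset.univ.filter (fun i => (v i).fst = 0) with hT
  set w : ι → A := fun i => (v i).snd with hw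
  have hinrw : ∀ i ∈ T, Unitization.inr (w i) = v i := by
    intro i hi
    ext
    · rw [Unitization.fst_inr]
      exact ((Finset.mem_filter.mp hi).2).symm
    · rw [Unitization.snd_inr]
  have hd0 : ∀ (a : A) (j : ι), j ∉ T → (b.repr (Unitization.inr a)) j = 0 := by
    intro a j hj
    by_contra hd
    apply hj
    rw [hT, Finset.mem_filter]
    refine ⟨Finset.mem_univ j, ?_⟩
    have h1 : (Unitization.inr a * v j).fst = 0 := by
      rw [Unitization.fst_mul, Unitization.fst_inr, zero_mul]
    rw [hxv (Unitization.inr a) j, Unitization.fst_smul] at h1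
    have hbf : (b j).fst = 0 := (smul_eq_zero.mp h1).resolve_left hd
    show (lam j • b j).fst = 0
    rw [Unitization.fst_smul, hbf, smul_zero]
  have hinj : Function.Injective (inrL K A) := fun x y h => Unitization.inr_injective h
  have hrep : ∀ a : A,
      a = ∑ j ∈ T, ((b.repr (Unitization.inr a)) j * (lam j)⁻¹) • w j := by
    intro a
    have lhs : (Unitization.inr a : Unitization K A)
        = ∑ j ∈ T, ((b.repr (Unitization.inr a)) j * (lam j)⁻¹) • v j := by
      conv_lhs => rw [← mul_one (Unitization.inr a : Unitization K A), ← hsumv,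
        Finset.mul_sum]
      rw [← Finset.sum_subset (Finset.subset_univ T)
        (fun j _ hj => by rw [hxv, hd0 a j hj, zero_smul])]
      refine Finset.sum_congr rfl (fun j _ => ?_)
      rw [hxv]
      show _ = (_ * _) • (lam j • b j)
      rw [smul_smul, mul_assoc, inv_mul_cancel₀ (hlam0 j), mul_one]
    apply hinj
    show inrL K A a = inrL K A (∑ j ∈ T, ((b.repr (Unitization.inr a)) j * (lam j)⁻¹) • w j)
    rw [map_sum]
    have : ∀ j ∈ T, ((b.repr (Unitization.inr a)) j * (lam j)⁻¹) • inrL K A (w j)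
        = ((b.repr (Unitization.inr a)) j * (lam j)⁻¹) • v j := by
      intro j hj
      rw [show inrL K A (w j) = Unitization.inr (w j) from rfl, hinrw j hj]
    simp only [map_smul]
    rw [Finset.sum_congr rfl this]
    exact lhs
  have hliv : LinearIndependent K (fun i : T => v i) := by
    set bv : Basis ι K (Unitization K A) :=
      b.unitsSMul (fun i => Units.mk0 (lam i) (hlam0 i)) with hbv
    have hbv_apply : ∀ i, bv i = v i := by
      intro i
      rw [hbv, Basis.unitsSMul_apply, Units.smul_def]
      rfl
    have h2 := bv.linearIndependent.comp (Subtype.val : T → ι) Subtype.val_injective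
    have h3 : (fun i : T => v i) = (⇑bv ∘ (Subtype.val : T → ι)) :=
      funext (fun i => (hbv_apply i).symm)
    rw [h3]
    exact h2
  have hliw : LinearIndependent K (fun i : T => w i) := by
    apply LinearIndependent.of_comp (inrL K A)
    have h3 : ((inrL K A) ∘ fun i : T => w i) = fun i : T => v i :=
      funext (fun i => hinrw i i.2)
    rw [h3]
    exact hliv
  have hspanw : ⊤ ≤ Submodule.span K (Set.range (fun i : T => w i)) := by
    intro a _
    rw [hrep a]
    exact Submodule.sum_mem _ (fun j hj =>
      Submodule.smul_mem _ _ (Submodule.subset_span ⟨⟨j, hj⟩, rfl⟩))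
  set B : Basis T K A := Basis.mk hliw hspanw with hB
  have hw_orth : ∀ i j : ι, i ∈ T → j ∈ T → i ≠ j → w i * w j = 0 := by
    intro i j hi hj hij
    apply Unitization.inr_injective (R := K)
    show Unitization.inr (w i * w j) = Unitization.inr (0 : A)
    rw [Unitization.inr_mul, hinrw i hi, hinrw j hj, hv_orth i j hij, Unitization.inr_zero]
  have hw_idem : ∀ i ∈ T, w i * w i = w i := by
    intro i hi
    apply Unitization.inr_injective (R := K)
    rw [Unitization.inr_mul, hinrw i hi]
    exact hv_idem i
  refine ⟨hfinA, Fintype.card T, B.reindex (Fintype.equivFin T), ?_, ?_⟩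
  · intro i j hij
    rw [Basis.reindex_apply, Basis.reindex_apply, hB, Basis.mk_apply, Basis.mk_apply]
    refine hw_orth _ _ ((Fintype.equivFin T).symm i).2 ((Fintype.equivFin T).symm j).2 ?_
    intro h
    exact hij (by simpa using congrArg (Fintype.equivFin T) (Subtype.coe_injective h))
  · intro i
    refine ⟨1, one_ne_zero, ?_⟩
    rw [Basis.reindex_apply, hB, Basis.mk_apply, one_smul]
    exact hw_idem _ ((Fintype.equivFin T).symm i).2

end

/-- For an algebra `A` with unitization `A₁ = Unitization K A`: `A₁` is an evolution algebra
iff `A` is an evolution algebra with a unit, iff `A` is a finite-dimensional non-zero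
trivial evolution algebra. -/
theorem stmt5 {K : Type} [Field K] {A : Type} [NonUnitalNonAssocRing A]
    [Module K A] [SMulCommClass K A A] [IsScalarTower K A A] :
    ((∃ (ι : Type) (b : Module.Basis ι K (Unitization K A)),
        ∀ i j : ι, i ≠ j → b i * b j = 0) ↔
      ((∃ (ι : Type) (b : Module.Basis ι K A), ∀ i j : ι, i ≠ j → b i * b j = 0) ∧
        ∃ e : A, ∀ a : A, a * e = a ∧ e * a = a)) ∧
    ((∃ (ι : Type) (b : Module.Basis ι K (Unitization K A)),
        ∀ i j : ι, i ≠ j → b i * b j = 0) ↔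
      (FiniteDimensional K A ∧ ∃ (n : ℕ) (b : Module.Basis (Fin n) K A),
        (∀ i j : Fin n, i ≠ j → b i * b j = 0) ∧
        ∀ i : Fin n, ∃ ω : K, ω ≠ 0 ∧ b i * b i = ω • b i)) := by
  have h13 : (∃ (ι : Type) (b : Basis ι K (Unitization K A)),
      ∀ i j : ι, i ≠ j → b i * b j = 0) →
      (FiniteDimensional K A ∧ ∃ (n : ℕ) (b : Basis (Fin n) K A),
        (∀ i j : Fin n, i ≠ j → b i * b j = 0) ∧
        ∀ i : Fin n, ∃ ω : K, ω ≠ 0 ∧ b i * b i = ω • b i) := by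
    rintro ⟨ι, b, h⟩
    exact unitToTrivial b h
  have h31 : (FiniteDimensional K A ∧ ∃ (n : ℕ) (b : Basis (Fin n) K A),
      (∀ i j : Fin n, i ≠ j → b i * b j = 0) ∧
      ∀ i : Fin n, ∃ ω : K, ω ≠ 0 ∧ b i * b i = ω • b i) →
      (∃ (ι : Type) (b : Basis ι K (Unitization K A)),
        ∀ i j : ι, i ≠ j → b i * b j = 0) := by
    rintro ⟨-, n, b, ho, hs⟩
    exact trivialToUnit b ho hs
  have h32 : (FiniteDimensional K A ∧ ∃ (n : ℕ) (b : Basis (Fin n) K A),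
      (∀ i j : Fin n, i ≠ j → b i * b j = 0) ∧
      ∀ i : Fin n, ∃ ω : K, ω ≠ 0 ∧ b i * b i = ω • b i) →
      ((∃ (ι : Type) (b : Basis ι K A), ∀ i j : ι, i ≠ j → b i * b j = 0) ∧
        ∃ e : A, ∀ a : A, a * e = a ∧ e * a = a) := by
    rintro ⟨-, n, b, ho, hs⟩
    exact ⟨⟨Fin n, b, ho⟩, unit_of_trivial b ho hs⟩
  have h23 : ((∃ (ι : Type) (b : Basis ι K A), ∀ i j : ι, i ≠ j → b i * b j = 0) ∧
      ∃ e : A, ∀ a : A, a * e = a ∧ e * a = a) →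
      (FiniteDimensional K A ∧ ∃ (n : ℕ) (b : Basis (Fin n) K A),
        (∀ i j : Fin n, i ≠ j → b i * b j = 0) ∧
        ∀ i : Fin n, ∃ ω : K, ω ≠ 0 ∧ b i * b i = ω • b i) := by
    rintro ⟨⟨ι, b, ho⟩, e, he⟩
    exact toTrivial b ho e (fun a => (he a).1)
  exact ⟨⟨fun h => h32 (h13 h), fun h => h31 (h23 h)⟩, ⟨h13, h31⟩⟩
end

section
/- Let A be an evolution algebra with natural basis B = {e_i : i ∈ Λ} and let M be a modular ideal of A. Then e_i ∈ M if and only if e_i² ∈ M. -/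
/-- In an evolution algebra with natural basis `b`, for any modular ideal `M`,
`b i ∈ M` iff `b i * b i ∈ M`. -/
theorem stmt6 {K : Type*} [Field K] {A : Type*} [NonUnitalNonAssocRing A]
    [Module K A] [SMulCommClass K A A] [IsScalarTower K A A]
    {ι : Type*} (b : Module.Basis ι K A) (hnat : ∀ i j : ι, i ≠ j → b i * b j = 0)
    (M : Submodule K A)
    (hideal : ∀ x : A, ∀ a ∈ M, x * a ∈ M ∧ a * x ∈ M)
    (hmod : ∃ u : A, ∀ a : A, a - a * u ∈ M)
    (i : ι) :
    b i ∈ M ↔ b i * b i ∈ M := by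
  constructor
  · intro h
    exact (hideal (b i) (b i) h).1
  · intro h
    obtain ⟨u, hu⟩ := hmod
    set c := b.repr u with hc
    have hrep : (c.sum fun j a => a • b j) = u := b.linearCombination_repr u
    have hmul : b i * u = c i • (b i * b i) := by
      rw [← hrep, Finsupp.mul_sum]
      rw [Finsupp.sum]
      by_cases hi : i ∈ c.support
      · rw [Finset.sum_eq_single i]
        · rw [mul_smul_comm]
        · intro j hj hji
          rw [mul_smul_comm, hnat i j (Ne.symm hji), smul_zero]
        · intro hni; exact absurd hi hni
      · have : c i = 0 := Finsupp.notMem_support_iff.mp hi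
        rw [this, zero_smul]
        apply Finset.sum_eq_zero
        intro j hj
        have hji : i ≠ j := fun e => hi (e ▸ hj)
        rw [mul_smul_comm, hnat i j hji, smul_zero]
    have h1 : b i - b i * u ∈ M := hu (b i)
    have h2 : c i • (b i * b i) ∈ M := M.smul_mem _ h
    have := M.add_mem h1 (hmul ▸ h2)
    simpa using this
end

section
/- Let A be an evolution algebra with natural basis B = {e_i : i ∈ Λ} and let M be a modular ideal of A with support Λ_M = ∪_{a∈M} {i : the i-th coordinate of a is nonzero}. Then M = span{e_i : i ∈ Λ_M}. -/
/-- Key computation: in an evolution algebra, `b i * x = (b.repr x i) • (b i * b i)`. -/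
lemma stmt7_key {K : Type*} [Field K] {A : Type*} [NonUnitalNonAssocRing A]
    [Module K A] [SMulCommClass K A A] [IsScalarTower K A A]
    {ι : Type*} (b : Module.Basis ι K A) (hnat : ∀ i j : ι, i ≠ j → b i * b j = 0)
    (i : ι) (x : A) : b i * x = b.repr x i • (b i * b i) := by
  conv_lhs => rw [← b.linearCombination_repr x]
  rw [Finsupp.linearCombination_apply, Finsupp.sum, Finset.mul_sum]
  simp_rw [mul_smul_comm]
  rw [Finset.sum_eq_single i
    (fun j _ hj => by rw [hnat i j (Ne.symm hj), smul_zero])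
    (fun h => by rw [Finsupp.notMem_support_iff.mp h, zero_smul])]

/-- A modular ideal `M` of an evolution algebra with natural basis `b` equals the span of
the basis vectors indexed by its support `Λ_M = {i | ∃ a ∈ M, (b.repr a) i ≠ 0}`. -/
theorem stmt7 {K : Type*} [Field K] {A : Type*} [NonUnitalNonAssocRing A]
    [Module K A] [SMulCommClass K A A] [IsScalarTower K A A]
    {ι : Type*} (b : Module.Basis ι K A) (hnat : ∀ i j : ι, i ≠ j → b i * b j = 0)
    (M : Submodule K A)
    (hideal : ∀ x : A, ∀ a ∈ M, x * a ∈ M ∧ a * x ∈ M)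
    (hmod : ∃ u : A, ∀ a : A, a - a * u ∈ M) :
    M = Submodule.span K (b '' {i : ι | ∃ a ∈ M, b.repr a i ≠ 0}) := by
  obtain ⟨u, hu⟩ := hmod
  apply le_antisymm
  · intro a ha
    have : a ∈ Submodule.span K (b '' ↑(b.repr a).support) := b.mem_span_repr_support a
    refine Submodule.span_mono ?_ this
    rintro _ ⟨j, hj, rfl⟩
    exact ⟨j, ⟨a, ha, Finsupp.mem_support_iff.mp hj⟩, rfl⟩
  · rw [Submodule.span_le]
    rintro _ ⟨i, ⟨a, haM, hai⟩, rfl⟩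
    -- b i * b i ∈ M
    have h1 : b i * a ∈ M := (hideal (b i) a haM).1
    have h2 : b i * a = b.repr a i • (b i * b i) := stmt7_key b hnat i a
    have hsq : b i * b i ∈ M := by
      have := M.smul_mem (b.repr a i)⁻¹ h1
      rwa [h2, smul_smul, inv_mul_cancel₀ hai, one_smul] at this
    have h3 : b i - b i * u ∈ M := hu (b i)
    have h4 : b i * u ∈ M := by
      rw [stmt7_key b hnat i u]
      exact M.smul_mem _ hsq
    have := M.add_mem h3 h4
    rwa [sub_add_cancel] at this
end

section
/- Let A be an evolution algebra with natural basis {e_i : i ∈ Λ} and M a modular ideal with modular unit u. Then Λ \ Λ_M is finite; more precisely Λ \ Λ_M ⊆ Λ_u, i.e., Λ_M ∪ Λ_u = Λ. -/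
/-- If `M` is a modular ideal of an evolution algebra with modular unit `u`, then
`Λ \ Λ_M` is finite; more precisely `Λ \ Λ_M ⊆ Λ_u`, i.e. `Λ_M ∪ Λ_u = Λ`. -/
theorem stmt8 {K : Type*} [Field K] {A : Type*} [NonUnitalNonAssocRing A]
    [Module K A] [SMulCommClass K A A] [IsScalarTower K A A]
    {ι : Type*} (b : Module.Basis ι K A) (hnat : ∀ i j : ι, i ≠ j → b i * b j = 0)
    (M : Submodule K A)
    (hideal : ∀ x : A, ∀ a ∈ M, x * a ∈ M ∧ a * x ∈ M)
    (u : A) (hu : ∀ a : A, a - a * u ∈ M) :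
    {i : ι | ¬ ∃ a ∈ M, b.repr a i ≠ 0} ⊆ {i : ι | b.repr u i ≠ 0} ∧
    {i : ι | ¬ ∃ a ∈ M, b.repr a i ≠ 0}.Finite ∧
    {i : ι | ∃ a ∈ M, b.repr a i ≠ 0} ∪ {i : ι | b.repr u i ≠ 0} = Set.univ := by
  have key : ∀ i : ι, b.repr u i = 0 → b i ∈ M := by
    intro i hi
    have hmul : b i * u = 0 := by
      conv_lhs => rw [← b.linearCombination_repr u, Finsupp.linearCombination_apply,
        Finsupp.sum, Finset.mul_sum]
      refine Finset.sum_eq_zero fun j hj => ?_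
      rcases eq_or_ne j i with rfl | hji
      · simp [hi]
      · rw [mul_smul_comm, hnat i j (Ne.symm hji), smul_zero]
    have := hu (b i)
    rwa [hmul, sub_zero] at this
  have hsub : {i : ι | ¬ ∃ a ∈ M, b.repr a i ≠ 0} ⊆ {i : ι | b.repr u i ≠ 0} := by
    intro i hi
    simp only [Set.mem_setOf_eq] at hi ⊢
    intro h0
    exact hi ⟨b i, key i h0, by simp⟩
  refine ⟨hsub, ((b.repr u).finite_support).subset hsub, ?_⟩
  ext i
  simp only [Set.mem_union, Set.mem_setOf_eq, Set.mem_univ, iff_true]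
  by_cases h : ∃ a ∈ M, b.repr a i ≠ 0
  · exact Or.inl h
  · exact Or.inr (hsub h)
end

section
/- Let A be an evolution algebra with natural basis {e_i : i ∈ Λ}, structure matrix (ω_ji) (so e_i² = Σ_j ω_ji e_j), and let M be a proper modular ideal with support Λ_M. Then ω_ii ≠ 0 for every i ∈ Λ \ Λ_M, and u_0 = Σ_{i ∈ Λ\Λ_M} (1/ω_ii) e_i is a modular unit for M. Moreover u ∈ A is a modular unit for M if and only if u = m + u_0 for some m ∈ M. -/
/-- For a proper modular ideal `M` of an evolution algebra with natural basis `b` and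
structure constants `ω j i = b.repr (b i * b i) j`: `ω i i ≠ 0` for every `i ∉ Λ_M`,
`u₀ = Σ_{i ∉ Λ_M} (ω i i)⁻¹ • b i` is a modular unit for `M`, and `u` is a modular unit
for `M` iff `u = m + u₀` for some `m ∈ M`. -/
theorem stmt9 {K : Type*} [Field K] {A : Type*} [NonUnitalNonAssocRing A]
    [Module K A] [SMulCommClass K A A] [IsScalarTower K A A]
    {ι : Type*} (b : Module.Basis ι K A) (hnat : ∀ i j : ι, i ≠ j → b i * b j = 0)
    (M : Submodule K A)
    (hideal : ∀ x : A, ∀ a ∈ M, x * a ∈ M ∧ a * x ∈ M)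
    (hmod : ∃ u : A, ∀ a : A, a - a * u ∈ M)
    (hproper : M ≠ ⊤) :
    (∀ i : ι, (¬ ∃ a ∈ M, b.repr a i ≠ 0) → b.repr (b i * b i) i ≠ 0) ∧
    {i : ι | ¬ ∃ a ∈ M, b.repr a i ≠ 0}.Finite ∧
    ∀ hfin : {i : ι | ¬ ∃ a ∈ M, b.repr a i ≠ 0}.Finite,
      (∀ a : A,
        a - a * (∑ i ∈ hfin.toFinset, (b.repr (b i * b i) i)⁻¹ • b i) ∈ M) ∧
      ∀ u : A, (∀ a : A, a - a * u ∈ M) ↔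
        ∃ m ∈ M, u = m + ∑ i ∈ hfin.toFinset, (b.repr (b i * b i) i)⁻¹ • b i := by
  classical
  obtain ⟨u, hu⟩ := hmod
  -- multiplication against a basis vector
  have hmulR : ∀ (x : A) (i : ι), x * b i = b.repr x i • (b i * b i) := by
    intro x i
    have h : (LinearMap.mulRight K (b i)) = (b.coord i).smulRight (b i * b i) := by
      apply b.ext
      intro j
      simp only [LinearMap.mulRight_apply, LinearMap.smulRight_apply, Module.Basis.coord_apply,
        Module.Basis.repr_self]
      by_cases hji : j = i
      · subst hji; simp
      · rw [hnat j i hji, Finsupp.single_apply, if_neg hji, zero_smul]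
    have := DFunLike.congr_fun h x
    simpa using this
  have hmulL : ∀ (x : A) (i : ι), b i * x = b.repr x i • (b i * b i) := by
    intro x i
    have h : (LinearMap.mulLeft K (b i)) = (b.coord i).smulRight (b i * b i) := by
      apply b.ext
      intro j
      simp only [LinearMap.mulLeft_apply, LinearMap.smulRight_apply, Module.Basis.coord_apply,
        Module.Basis.repr_self]
      by_cases hji : j = i
      · subst hji; simp
      · rw [hnat i j (Ne.symm hji), Finsupp.single_apply, if_neg hji, zero_smul]
    have := DFunLike.congr_fun h x
    simpa using this
  have hcomm : ∀ x y : A, x * y = y * x := by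
    intro x y
    have h : LinearMap.mulLeft K x = LinearMap.mulRight K x := by
      apply b.ext
      intro j
      rw [LinearMap.mulLeft_apply, LinearMap.mulRight_apply, hmulR x j, hmulL x j]
    exact DFunLike.congr_fun h y
  set S := {i : ι | ¬ ∃ a ∈ M, b.repr a i ≠ 0} with hSdef
  have hSmem : ∀ i ∈ S, ∀ a ∈ M, b.repr a i = 0 := by
    intro i hi a ha
    by_contra h
    exact hi ⟨a, ha, h⟩
  have key : ∀ i ∈ S, b.repr u i * b.repr (b i * b i) i = 1 := by
    intro i hi
    have h1 : b i - b i * u ∈ M := hu (b i)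
    have h2 := hSmem i hi _ h1
    rw [hmulL] at h2
    simp only [map_sub, map_smul, Module.Basis.repr_self, Finsupp.sub_apply, Finsupp.smul_apply,
      Finsupp.single_eq_same, smul_eq_mul] at h2
    have := sub_eq_zero.mp h2
    exact this.symm
  have hω : ∀ i ∈ S, b.repr (b i * b i) i ≠ 0 := by
    intro i hi h
    have := key i hi
    rw [h, mul_zero] at this
    exact one_ne_zero this.symm
  have hui : ∀ i ∈ S, b.repr u i = (b.repr (b i * b i) i)⁻¹ := by
    intro i hi
    exact eq_inv_of_mul_eq_one_left (key i hi)
  have hfinS : S.Finite := by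
    apply Set.Finite.subset (b.repr u).support.finite_toSet
    intro i hi
    simp only [Finset.coe_sort_coe, Finset.mem_coe, Finsupp.mem_support_iff]
    rw [hui i hi]
    exact inv_ne_zero (hω i hi)
  -- squares of basis vectors in the support of M lie in M
  have hsq : ∀ i, i ∉ S → b i * b i ∈ M := by
    intro i hiS
    obtain ⟨m, hm, hmi⟩ := not_not.mp hiS
    have h1 : b i * m ∈ M := (hideal (b i) m hm).1
    rw [hmulL] at h1
    have := M.smul_mem (b.repr m i)⁻¹ h1
    rwa [inv_smul_smul₀ hmi] at this
  -- products with elements supported in Λ_M lie in M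
  have hmulM : ∀ v : A, (∀ i ∈ S, b.repr v i = 0) → ∀ a : A, a * v ∈ M := by
    intro v hv a
    have hvv : a * v = ((b.repr v).sum fun i c => c • (a * b i)) := by
      conv_lhs => rw [← b.linearCombination_repr v]
      rw [Finsupp.linearCombination_apply, Finsupp.mul_sum]
      exact Finsupp.sum_congr fun i _ => (mul_smul_comm _ _ _)
    rw [hvv]
    apply Submodule.sum_mem
    intro i hi
    have hiS : i ∉ S := by
      intro h
      exact (Finsupp.mem_support_iff.mp hi) (hv i h)
    show b.repr v i • (a * b i) ∈ M
    rw [hmulR]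
    exact M.smul_mem _ (M.smul_mem _ (hsq i hiS))
  refine ⟨fun i hi => hω i hi, hfinS, fun hfin => ?_⟩
  set u₀ := ∑ i ∈ hfin.toFinset, (b.repr (b i * b i) i)⁻¹ • b i with hu₀def
  have hrepr₀ : ∀ j, b.repr u₀ j =
      if j ∈ hfin.toFinset then (b.repr (b j * b j) j)⁻¹ else 0 := by
    intro j
    rw [hu₀def, map_sum, Finset.sum_apply']
    simp only [map_smul, Module.Basis.repr_self, Finsupp.smul_single, smul_eq_mul, mul_one,
      Finsupp.single_apply]
    simp [Finset.sum_ite_eq']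
  have hdiff : ∀ i ∈ S, b.repr (u - u₀) i = 0 := by
    intro i hi
    rw [map_sub, Finsupp.sub_apply, hrepr₀ i, if_pos (hfin.mem_toFinset.mpr hi), hui i hi,
      sub_self]
  have hu₀mod : ∀ a : A, a - a * u₀ ∈ M := by
    intro a
    have heq : a - a * u₀ = (a - a * u) + a * (u - u₀) := by
      rw [mul_sub]; abel
    rw [heq]
    exact M.add_mem (hu a) (hmulM _ hdiff a)
  refine ⟨hu₀mod, fun u' => ⟨?_, ?_⟩⟩
  · intro hu'
    refine ⟨u' - u₀, ?_, by abel⟩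
    have h1 : u' - u' * u₀ ∈ M := hu₀mod u'
    have h2 : u₀ - u₀ * u' ∈ M := hu' u₀
    have heq : u' - u₀ = (u' - u' * u₀) - (u₀ - u₀ * u') := by
      rw [hcomm u₀ u']; abel
    rw [heq]
    exact M.sub_mem h1 h2
  · rintro ⟨m, hm, rfl⟩
    intro a
    have heq : a - a * (m + u₀) = (a - a * u₀) - a * m := by
      rw [mul_add]; abel
    rw [heq]
    exact M.sub_mem (hu₀mod a) ((hideal a m hm).1)
end

section
/- Let A be an evolution algebra with natural basis {e_i : i ∈ Λ} and structure matrix (ω_ij), and let M be a non-zero modular ideal with support Λ_M. Then for every i ∈ Λ \ Λ_M, D(i) \ {i} ⊆ Λ_M, where D(i) is the set of descendents of i. -/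
/-- First-generation descendents of an index `i` w.r.t. structure constants `ω`:
`D¹(i) = {j | ω j i ≠ 0}`. -/
def descOne {ι K : Type*} [Zero K] (ω : ι → ι → K) (i : ι) : Set ι := {j | ω j i ≠ 0}

/-- `descIter ω n i` is the set `Dⁿ(i)` of `n`-th generation descendents (with the
convention `D⁰(i) = {i}`), so `Dⁿ(i) = ∪_{j ∈ Dⁿ⁻¹(i)} D¹(j)`. -/
def descIter {ι K : Type*} [Zero K] (ω : ι → ι → K) : ℕ → ι → Set ι
  | 0, i => {i}
  | n + 1, i => ⋃ j ∈ descIter ω n i, descOne ω j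

/-- The set of descendents `D(i) = ∪_{n ≥ 1} Dⁿ(i)`. -/
def descSet {ι K : Type*} [Zero K] (ω : ι → ι → K) (i : ι) : Set ι :=
  ⋃ n : ℕ, descIter ω (n + 1) i

/-- If `M` is a non-zero modular ideal of an evolution algebra with support `Λ_M`, then
for every `i ∈ Λ \ Λ_M` one has `D(i) \ {i} ⊆ Λ_M`. -/
theorem stmt10 {K : Type*} [Field K] {A : Type*} [NonUnitalNonAssocRing A]
    [Module K A] [SMulCommClass K A A] [IsScalarTower K A A]
    {ι : Type*} (b : Module.Basis ι K A) (hnat : ∀ i j : ι, i ≠ j → b i * b j = 0)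
    (M : Submodule K A)
    (hideal : ∀ x : A, ∀ a ∈ M, x * a ∈ M ∧ a * x ∈ M)
    (hmod : ∃ u : A, ∀ a : A, a - a * u ∈ M)
    (hM : M ≠ ⊥) :
    ∀ i : ι, (¬ ∃ a ∈ M, b.repr a i ≠ 0) →
      ∀ k : ι, k ∈ descSet (fun j i' => b.repr (b i' * b i') j) i → k ≠ i →
        ∃ a ∈ M, b.repr a k ≠ 0 := by
  classical
  intro i hi k hk hki
  set ω : ι → ι → K := fun j i' => b.repr (b i' * b i') j with hω
  -- key multiplication lemma
  have key : ∀ (j : ι) (a : A), b j * a = b.repr a j • (b j * b j) := by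
    intro j a
    conv_lhs => rw [← b.linearCombination_repr a, Finsupp.linearCombination_apply]
    rw [Finsupp.mul_sum]
    rw [Finsupp.sum_eq_single j (fun l c hlj => ?_) (by simp)]
    · rw [mul_smul_comm]
    · rw [mul_smul_comm, hnat j l (Ne.symm hlj), smul_zero]
  have step : ∀ j k', (∃ a ∈ M, b.repr a j ≠ 0) → ω k' j ≠ 0 →
      ∃ a ∈ M, b.repr a k' ≠ 0 := by
    rintro j k' ⟨a, haM, haj⟩ hωkj
    refine ⟨b j * a, (hideal (b j) a haM).1, ?_⟩
    rw [key j a, map_smul, Finsupp.smul_apply, smul_eq_mul]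
    exact mul_ne_zero haj hωkj
  have base : ∀ k', k' ≠ i → ω k' i ≠ 0 → ∃ a ∈ M, b.repr a k' ≠ 0 := by
    intro k' hk'i hωk
    obtain ⟨u, hu⟩ := hmod
    have hmem : b i - b i * u ∈ M := hu (b i)
    have hrepr : ∀ l, b.repr (b i - b i * u) l
        = (if i = l then (1:K) else 0) - b.repr u i * ω l i := by
      intro l
      rw [map_sub, key i u, map_smul, Finsupp.sub_apply, Finsupp.smul_apply,
        smul_eq_mul, b.repr_self, Finsupp.single_apply]
    have hui : b.repr u i ≠ 0 := by
      have h0 : b.repr (b i - b i * u) i = 0 := by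
        by_contra h; exact hi ⟨_, hmem, h⟩
      rw [hrepr i] at h0
      simp only [if_pos rfl] at h0
      intro h
      rw [h, zero_mul, sub_zero] at h0
      exact one_ne_zero h0
    refine ⟨_, hmem, ?_⟩
    rw [hrepr k', if_neg (fun h => hk'i h.symm), zero_sub, neg_ne_zero]
    exact mul_ne_zero hui hωk
  have main : ∀ n, ∀ k', k' ∈ descIter ω (n + 1) i → k' ≠ i →
      ∃ a ∈ M, b.repr a k' ≠ 0 := by
    intro n
    induction n with
    | zero =>
      intro k' hk' hne
      simp only [descIter, Set.mem_iUnion, Set.mem_singleton_iff, exists_prop] at hk'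
      obtain ⟨j, rfl, hkj⟩ := hk'
      exact base k' hne hkj
    | succ n ih =>
      intro k' hk' hne
      rw [descIter] at hk'
      obtain ⟨j, hj, hkj⟩ := Set.mem_iUnion₂.mp hk'
      by_cases hji : j = i
      · subst hji; exact base k' hne hkj
      · exact step j k' (ih j hj hji) hkj
  obtain ⟨n, hn⟩ := Set.mem_iUnion.mp hk
  exact main n k hn hki
end

section
/- A non-zero evolution algebra A is semisimple (i.e., the intersection of its maximal modular ideals is {0}) if and only if A is a non-zero trivial evolution algebra (i.e., relative to a natural basis, e_i² = ω_ii e_i with ω_ii ≠ 0 for all i). Consequently, a finite-dimensional evolution algebra is semisimple if and only if it has a unit. -/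
section Defs

variable {K : Type*} [Field K] {A : Type*} [NonUnitalNonAssocRing A]
  [Module K A] [SMulCommClass K A A] [IsScalarTower K A A]

/-- A submodule is an ideal if it absorbs multiplication on both sides. -/
def IsIdeal (M : Submodule K A) : Prop :=
  ∀ x : A, ∀ a ∈ M, x * a ∈ M ∧ a * x ∈ M

/-- A modular ideal: an ideal admitting a modular unit `u` with `a - a * u ∈ M` for all `a`. -/
def IsModularIdeal (M : Submodule K A) : Prop :=
  IsIdeal M ∧ ∃ u : A, ∀ a : A, a - a * u ∈ M

/-- A maximal modular ideal: a proper modular ideal maximal among proper ideals. -/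
def IsMaxModularIdeal (M : Submodule K A) : Prop :=
  IsModularIdeal M ∧ M ≠ ⊤ ∧ ∀ N : Submodule K A, IsIdeal N → M < N → N = ⊤

/-- The Jacobson radical: the intersection of all maximal modular ideals. -/
def jacobsonRad (K A : Type*) [Field K] [NonUnitalNonAssocRing A]
    [Module K A] [SMulCommClass K A A] [IsScalarTower K A A] : Submodule K A :=
  sInf {M : Submodule K A | IsMaxModularIdeal M}

end Defs

section Aux
set_option linter.unusedSectionVars false

variable {K : Type*} [Field K] {A : Type*} [NonUnitalNonAssocRing A]
  [Module K A] [SMulCommClass K A A] [IsScalarTower K A A] {ι : Type*}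

/-- In an evolution algebra, `b i * a = (repr a i) • (b i)²`. -/
lemma EvolAux.basis_mul (b : Module.Basis ι K A) (hnat : ∀ i j : ι, i ≠ j → b i * b j = 0)
    (i : ι) (a : A) : b i * a = b.repr a i • (b i * b i) := by
  have h : LinearMap.mulLeft K (b i)
      = ((Finsupp.lapply i : (ι →₀ K) →ₗ[K] K) ∘ₗ b.repr.toLinearMap).smulRight (b i * b i) := by
    refine b.ext fun j => ?_
    by_cases hji : j = i
    · subst hji; simp
    · simp [hnat i j (fun h => hji h.symm), Finsupp.single_apply, hji]
  simpa using DFunLike.congr_fun h a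

/-- In an evolution algebra, `a * b i = (repr a i) • (b i)²`. -/
lemma EvolAux.mul_basis (b : Module.Basis ι K A) (hnat : ∀ i j : ι, i ≠ j → b i * b j = 0)
    (i : ι) (a : A) : a * b i = b.repr a i • (b i * b i) := by
  have h : LinearMap.mulRight K (b i)
      = ((Finsupp.lapply i : (ι →₀ K) →ₗ[K] K) ∘ₗ b.repr.toLinearMap).smulRight (b i * b i) := by
    refine b.ext fun j => ?_
    by_cases hji : j = i
    · subst hji; simp
    · simp [hnat j i hji, Finsupp.single_apply, hji]
  simpa using DFunLike.congr_fun h a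

/-- In a trivial evolution algebra, coordinates of a product. -/
lemma EvolAux.repr_mul (b : Module.Basis ι K A) (hnat : ∀ i j : ι, i ≠ j → b i * b j = 0)
    {ω : ι → K} (hω : ∀ j, b j * b j = ω j • b j) (x a : A) (i : ι) :
    b.repr (x * a) i = b.repr x i * (b.repr a i * ω i) := by
  set φ : A →ₗ[K] K := (Finsupp.lapply i : (ι →₀ K) →ₗ[K] K) ∘ₗ b.repr.toLinearMap with hφ
  have h : φ ∘ₗ LinearMap.mulRight K a = (b.repr a i * ω i) • φ := by
    refine b.ext fun j => ?_
    have h1 : b j * a = (b.repr a j * ω j) • b j := by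
      rw [EvolAux.basis_mul b hnat j a, hω j, smul_smul]
    simp only [LinearMap.comp_apply, LinearMap.mulRight_apply, h1, map_smul,
      LinearMap.smul_apply, smul_eq_mul, hφ, LinearEquiv.coe_toLinearMap,
      Finsupp.lapply_apply, Module.Basis.repr_self]
    by_cases hji : j = i
    · subst hji; simp
    · simp [Finsupp.single_apply, hji]
  have := DFunLike.congr_fun h x
  simpa [hφ, mul_comm] using this

/-- Backward direction: a trivial evolution algebra is semisimple. -/
lemma EvolAux.rad_eq_bot (b : Module.Basis ι K A) (hnat : ∀ i j : ι, i ≠ j → b i * b j = 0)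
    (h : ∀ i : ι, ∃ ω : K, ω ≠ 0 ∧ b i * b i = ω • b i) : jacobsonRad K A = ⊥ := by
  choose ω hω0 hωe using h
  set φ : ι → A →ₗ[K] K := fun i =>
    (Finsupp.lapply i : (ι →₀ K) →ₗ[K] K) ∘ₗ b.repr.toLinearMap with hφ
  have hφa : ∀ i (a : A), φ i a = b.repr a i := fun i a => rfl
  have hmax : ∀ i : ι, IsMaxModularIdeal (LinearMap.ker (φ i)) := by
    intro i
    refine ⟨⟨?_, (ω i)⁻¹ • b i, ?_⟩, ?_, ?_⟩
    · intro x a ha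
      rw [LinearMap.mem_ker, hφa] at ha
      constructor <;> · rw [LinearMap.mem_ker, hφa, EvolAux.repr_mul b hnat hωe, ha]; ring
    · intro a
      rw [LinearMap.mem_ker, map_sub, hφa, hφa,
        EvolAux.repr_mul b hnat hωe a ((ω i)⁻¹ • b i) i, map_smul]
      simp [inv_mul_cancel₀ (hω0 i)]
    · intro hT
      have : b i ∈ LinearMap.ker (φ i) := hT ▸ Submodule.mem_top
      rw [LinearMap.mem_ker, hφa] at this
      simp at this
    · intro N _ hlt
      obtain ⟨n, hnN, hnM⟩ := SetLike.exists_of_lt hlt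
      rw [LinearMap.mem_ker, hφa] at hnM
      rw [Submodule.eq_top_iff']
      intro a
      have h1 : a - (b.repr a i * (b.repr n i)⁻¹) • n ∈ LinearMap.ker (φ i) := by
        rw [LinearMap.mem_ker, map_sub, map_smul, hφa, hφa, smul_eq_mul,
          mul_assoc, inv_mul_cancel₀ hnM, mul_one, sub_self]
      have h2 : a - (b.repr a i * (b.repr n i)⁻¹) • n ∈ N := hlt.le h1
      have := add_mem h2 (Submodule.smul_mem N (b.repr a i * (b.repr n i)⁻¹) hnN)
      simpa using this
  rw [eq_bot_iff]
  intro x hx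
  rw [Submodule.mem_bot, ← b.repr.map_eq_zero_iff]
  ext i
  have := Submodule.mem_sInf.mp hx _ (hmax i)
  rw [LinearMap.mem_ker, hφa] at this
  simpa using this

/-- Forward direction: a semisimple evolution algebra is trivial. -/
lemma EvolAux.triv_of_rad_eq_bot [Nontrivial A] (b : Module.Basis ι K A)
    (hnat : ∀ i j : ι, i ≠ j → b i * b j = 0) (h : jacobsonRad K A = ⊥) :
    ∀ i : ι, ∃ ω : K, ω ≠ 0 ∧ b i * b i = ω • b i := by
  intro i
  set ω : K := b.repr (b i * b i) i with hωdef
  have key : ∀ M : Submodule K A, IsMaxModularIdeal M →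
      (b i * b i - ω • b i ∈ M ∧ (ω = 0 → b i ∈ M)) := by
    intro M ⟨⟨hid, u, hu⟩, _, _⟩
    by_cases hbi : b i ∈ M
    · exact ⟨sub_mem (hid (b i) (b i) hbi).1 (Submodule.smul_mem _ _ hbi), fun _ => hbi⟩
    · set μ : K := b.repr u i with hμdef
      have h1 : b i - μ • (b i * b i) ∈ M := by
        have := hu (b i)
        rwa [EvolAux.basis_mul b hnat i u] at this
      have h2 : b i * (b i - μ • (b i * b i)) ∈ M := (hid (b i) _ h1).1
      have h3 : b i * (b i - μ • (b i * b i)) = (1 - μ * ω) • (b i * b i) := by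
        rw [mul_sub, mul_smul_comm, EvolAux.basis_mul b hnat i (b i * b i),
          sub_smul, one_smul, ← hωdef, smul_smul]
      have hμω : μ * ω = 1 := by
        by_contra hne
        have h4 : (1 - μ * ω) • (b i * b i) ∈ M := h3 ▸ h2
        have h5 : b i * b i ∈ M := by
          have := Submodule.smul_mem M (1 - μ * ω)⁻¹ h4
          rwa [smul_smul, inv_mul_cancel₀ (sub_ne_zero.mpr fun hh => hne hh.symm),
            one_smul] at this
        have := add_mem h1 (Submodule.smul_mem M μ h5)
        simp only [sub_add_cancel] at this
        exact hbi this
      have hωne : ω ≠ 0 := fun h0 => by simp [h0] at hμω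
      refine ⟨?_, fun h0 => absurd h0 hωne⟩
      have heq : b i * b i - ω • b i = (-ω) • (b i - μ • (b i * b i)) := by
        rw [smul_sub, smul_smul, neg_mul, mul_comm ω μ, hμω, neg_smul, neg_smul, one_smul,
          sub_neg_eq_add, neg_add_eq_sub]
      rw [heq]
      exact Submodule.smul_mem M _ h1
  have hωne : ω ≠ 0 := by
    intro h0
    have hbmem : b i ∈ jacobsonRad K A := Submodule.mem_sInf.mpr fun M hM => (key M hM).2 h0
    rw [h, Submodule.mem_bot] at hbmem
    exact b.ne_zero i hbmem
  have hz : b i * b i - ω • b i ∈ jacobsonRad K A :=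
    Submodule.mem_sInf.mpr fun M hM => (key M hM).1
  rw [h, Submodule.mem_bot, sub_eq_zero] at hz
  exact ⟨ω, hωne, hz⟩

/-- A trivial finite-dimensional evolution algebra has a unit. -/
lemma EvolAux.unit_of_triv [FiniteDimensional K A] (b : Module.Basis ι K A)
    (hnat : ∀ i j : ι, i ≠ j → b i * b j = 0)
    (h : ∀ i : ι, ∃ ω : K, ω ≠ 0 ∧ b i * b i = ω • b i) :
    ∃ e : A, ∀ a : A, a * e = a ∧ e * a = a := by
  haveI : Fintype ι := FiniteDimensional.fintypeBasisIndex b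
  choose ω hω0 hωe using h
  refine ⟨∑ i, (ω i)⁻¹ • b i, fun a => ⟨?_, ?_⟩⟩
  · rw [Finset.mul_sum]
    have : ∀ i : ι, a * ((ω i)⁻¹ • b i) = b.repr a i • b i := by
      intro i
      rw [mul_smul_comm, EvolAux.mul_basis b hnat i a, hωe i, smul_smul, smul_smul,
        mul_comm ((ω i)⁻¹) (b.repr a i), mul_assoc, inv_mul_cancel₀ (hω0 i), mul_one]
    simp_rw [this]
    exact b.sum_repr a
  · rw [Finset.sum_mul]
    have : ∀ i : ι, ((ω i)⁻¹ • b i) * a = b.repr a i • b i := by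
      intro i
      rw [smul_mul_assoc, EvolAux.basis_mul b hnat i a, hωe i, smul_smul, smul_smul,
        mul_comm ((ω i)⁻¹) (b.repr a i), mul_assoc, inv_mul_cancel₀ (hω0 i), mul_one]
    simp_rw [this]
    exact b.sum_repr a

/-- An evolution algebra with a unit is trivial. -/
lemma EvolAux.triv_of_unit [Nontrivial A] (b : Module.Basis ι K A)
    (hnat : ∀ i j : ι, i ≠ j → b i * b j = 0)
    (h : ∃ e : A, ∀ a : A, a * e = a ∧ e * a = a) :
    ∀ i : ι, ∃ ω : K, ω ≠ 0 ∧ b i * b i = ω • b i := by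
  obtain ⟨e, he⟩ := h
  intro i
  have h1 : b.repr e i • (b i * b i) = b i := by
    rw [← EvolAux.mul_basis b hnat i e]
    exact (he (b i)).2
  have hc : b.repr e i ≠ 0 := by
    intro h0
    rw [h0, zero_smul] at h1
    exact b.ne_zero i h1.symm
  refine ⟨(b.repr e i)⁻¹, inv_ne_zero hc, ?_⟩
  calc b i * b i = (b.repr e i)⁻¹ • (b.repr e i • (b i * b i)) := by
        rw [smul_smul, inv_mul_cancel₀ hc, one_smul]
    _ = (b.repr e i)⁻¹ • b i := by rw [h1]

end Aux

/-- A non-zero evolution algebra is semisimple (the intersection of its maximal modular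
ideals is `{0}`) iff it is a non-zero trivial evolution algebra (`e_i² = ω_ii • e_i`,
`ω_ii ≠ 0`, relative to a natural basis). Consequently, a finite-dimensional evolution
algebra is semisimple iff it has a unit. -/
theorem stmt15 {K : Type*} [Field K] {A : Type*} [NonUnitalNonAssocRing A]
    [Module K A] [SMulCommClass K A A] [IsScalarTower K A A] [Nontrivial A]
    {ι : Type*} (b : Module.Basis ι K A) (hnat : ∀ i j : ι, i ≠ j → b i * b j = 0) :
    (jacobsonRad K A = ⊥ ↔ ∀ i : ι, ∃ ω : K, ω ≠ 0 ∧ b i * b i = ω • b i) ∧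
    (FiniteDimensional K A →
      (jacobsonRad K A = ⊥ ↔ ∃ e : A, ∀ a : A, a * e = a ∧ e * a = a)) := by
  refine ⟨⟨EvolAux.triv_of_rad_eq_bot b hnat, EvolAux.rad_eq_bot b hnat⟩, fun hfd => ?_⟩
  exact ⟨fun h => EvolAux.unit_of_triv b hnat (EvolAux.triv_of_rad_eq_bot b hnat h),
    fun h => EvolAux.rad_eq_bot b hnat (EvolAux.triv_of_unit b hnat h)⟩
end

section
/- In the 2-dimensional evolution algebra A with natural basis {e_1, e_2}, e_1² = e_1 and e_2² = e_1 + e_2: the element e_1 lies in the Jacobson radical Rad(A) = K·e_1, yet e_1 is not quasi-invertible (there is no b ∈ A with e_1 + b - e_1 b = 0). -/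
/-- In the 2-dimensional evolution algebra with natural basis `{e₁, e₂}`, `e₁² = e₁`,
`e₂² = e₁ + e₂`: the element `e₁` lies in the Jacobson radical `Rad(A) = K·e₁`, yet `e₁`
is not quasi-invertible. -/
theorem stmt18 {K : Type*} [Field K] {A : Type*} [NonUnitalNonAssocRing A]
    [Module K A] [SMulCommClass K A A] [IsScalarTower K A A]
    (b : Module.Basis (Fin 2) K A)
    (h01 : b 0 * b 1 = 0) (h10 : b 1 * b 0 = 0)
    (h00 : b 0 * b 0 = b 0) (h11 : b 1 * b 1 = b 0 + b 1) :
    jacobsonRad K A = (K ∙ b 0) ∧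
    b 0 ∈ jacobsonRad K A ∧
    ¬ ∃ x : A, b 0 + x - b 0 * x = 0 := by
  have hsum : ∀ a : A, a = b.repr a 0 • b 0 + b.repr a 1 • b 1 := fun a => by
    have := b.sum_repr a
    rw [Fin.sum_univ_two] at this
    exact this.symm
  have hmul : ∀ x y : A, x * y =
      (b.repr x 0 * b.repr y 0 + b.repr x 1 * b.repr y 1) • b 0
        + (b.repr x 1 * b.repr y 1) • b 1 := fun x y => by
    conv_lhs => rw [hsum x, hsum y]
    simp only [add_mul, mul_add, smul_mul_assoc, mul_smul_comm, h00, h01, h10, h11,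
      smul_zero, zero_add, add_zero, smul_add, smul_smul]
    module
  have e00 : b.repr (b 0) 0 = 1 := by simp
  have e01 : b.repr (b 0) 1 = 0 := by simp [Module.Basis.repr_self, Finsupp.single_apply]
  have e10 : b.repr (b 1) 0 = 0 := by simp [Module.Basis.repr_self, Finsupp.single_apply]
  have e11 : b.repr (b 1) 1 = 1 := by simp
  have hmem : ∀ v : A, v ∈ (K ∙ b 0) ↔ b.repr v 1 = 0 := fun v => by
    rw [Submodule.mem_span_singleton]
    constructor
    · rintro ⟨c, rfl⟩; simp [e01]
    · intro h
      exact ⟨b.repr v 0, by rw [hsum v, h]; simp⟩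
  -- x * b 0 = (repr x 0) • b 0,  b 0 * x = (repr x 0) • b 0
  have hxb0 : ∀ x : A, x * b 0 = b.repr x 0 • b 0 := fun x => by
    rw [hmul x (b 0), e00, e01]; ring_nf; simp
  have hb0x : ∀ x : A, b 0 * x = b.repr x 0 • b 0 := fun x => by
    rw [hmul (b 0) x, e00, e01]; ring_nf; simp
  have hxb1 : ∀ x : A, x * b 1 = b.repr x 1 • b 0 + b.repr x 1 • b 1 := fun x => by
    rw [hmul x (b 1), e10, e11]; ring_nf
  -- K ∙ b 0 is an ideal
  have hIdeal : IsIdeal (K ∙ b 0) := by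
    intro x a ha
    rw [hmem] at ha
    constructor
    · rw [hmem, hmul x a, ha]; simp [e01]
    · rw [hmem, hmul a x, ha]; simp [e01]
  -- if both b 0 and b 1 lie in N, then N = ⊤
  have htop : ∀ N : Submodule K A, b 0 ∈ N → b 1 ∈ N → N = ⊤ := by
    intro N h0 h1
    rw [Submodule.eq_top_iff']
    intro a
    rw [hsum a]
    exact N.add_mem (N.smul_mem _ h0) (N.smul_mem _ h1)
  have hb1notin : b 1 ∉ (K ∙ b 0) := by
    rw [hmem, e11]; exact one_ne_zero
  -- any ideal M containing an element with nonzero second coordinate,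
  -- and containing b 0, is ⊤
  have hMax : IsMaxModularIdeal (K ∙ b 0) := by
    refine ⟨⟨hIdeal, b 1, fun a => ?_⟩, ?_, ?_⟩
    · rw [hmem, hxb1 a]
      simp [map_sub, e01, e11]
    · intro h
      exact hb1notin (h ▸ Submodule.mem_top)
    · intro N hN hlt
      obtain ⟨v, hvN, hvnot⟩ := SetLike.exists_of_lt hlt
      rw [hmem] at hvnot
      have hb0N : b 0 ∈ N := hlt.le (Submodule.mem_span_singleton_self _)
      have h1 : v * b 1 ∈ N := (hN (b 1) v hvN).2
      rw [hxb1 v] at h1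
      have h2 : b.repr v 1 • b 1 ∈ N := by
        have := N.sub_mem h1 (N.smul_mem (b.repr v 1) hb0N)
        simpa using this
      have hb1N : b 1 ∈ N := by
        have := N.smul_mem (b.repr v 1)⁻¹ h2
        rwa [smul_smul, inv_mul_cancel₀ hvnot, one_smul] at this
      exact htop N hb0N hb1N
  -- uniqueness: every maximal modular ideal is K ∙ b 0
  have hUniq : ∀ M : Submodule K A, IsMaxModularIdeal M → M = (K ∙ b 0) := by
    intro M ⟨⟨hMid, _⟩, hMne, hMmax⟩
    have hle : M ≤ (K ∙ b 0) := by
      intro v hv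
      rw [hmem]
      by_contra hv1
      -- derive M = ⊤
      have h1 : v * b 1 ∈ M := (hMid (b 1) v hv).2
      have h2 : b 0 * v ∈ M := (hMid (b 0) v hv).1
      rw [hxb1 v] at h1
      rw [hb0x v] at h2
      have h3 : b.repr v 1 • b 1 ∈ M := by
        have := M.sub_mem hv h2
        rw [hsum v] at this
        simpa using this
      have hb1M : b 1 ∈ M := by
        have := M.smul_mem (b.repr v 1)⁻¹ h3
        rwa [smul_smul, inv_mul_cancel₀ hv1, one_smul] at this
      have hb0M : b 0 ∈ M := by
        have := (hMid (b 1) (b 1) hb1M).1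
        rw [h11] at this
        have := M.sub_mem this hb1M
        simpa using this
      exact hMne (htop M hb0M hb1M)
    rcases eq_or_lt_of_le hle with h | h
    · exact h
    · exact absurd (hb1notin ((hMmax _ hIdeal h) ▸ Submodule.mem_top)) (fun h => h)
  have hrad : jacobsonRad K A = (K ∙ b 0) := by
    have hset : {M : Submodule K A | IsMaxModularIdeal M} = {(K ∙ b 0)} := by
      ext M
      simp only [Set.mem_setOf_eq, Set.mem_singleton_iff]
      exact ⟨hUniq M, fun h => h ▸ hMax⟩
    rw [jacobsonRad, hset, sInf_singleton]
  refine ⟨hrad, ?_, ?_⟩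
  · rw [hrad]; exact Submodule.mem_span_singleton_self _
  · rintro ⟨x, hx⟩
    have := congrArg (fun a => b.repr a 0) hx
    simp only [map_sub, map_add, Finsupp.coe_sub, Finsupp.coe_add, Pi.sub_apply,
      Pi.add_apply, e00, map_zero, Finsupp.coe_zero, Pi.zero_apply] at this
    rw [hb0x x] at this
    simp [e00] at this
end
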